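/- Let P and Q be probability mass functions on a finite set X, and let f(d) = Σ_{x∈X} P(x)·log(d(x)) + Σ_{x∈X} Q(x)·log(1 - d(x)) for d : X → (0,1). Then for each x with P(x)+Q(x) > 0, the pointwise maximizer of a·log(t) + b·log(1-t) over t ∈ (0,1) with a = P(x), b = Q(x) is t = a/(a+b); hence the discriminator d*(x) = P(x)/(P(x)+Q(x)) maximizes f. -/

import Mathlib

lemma gan_half (a b t : ℝ) (ha : 0 ≤ a) (hb : 0 ≤ b) (hab : 0 < a + b)
    (ht : t ∈ Set.Ioo (0 : ℝ) 1) :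
    a * Real.log t ≤ a * Real.log (a / (a + b)) + (t * (a + b) - a) := by
  obtain ⟨ht0, ht1⟩ := ht
  rcases eq_or_lt_of_le ha with h0 | h0
  · simp [← h0]
    positivity
  · have key : Real.log (t * (a + b) / a) ≤ t * (a + b) / a - 1 :=
      Real.log_le_sub_one_of_pos (by positivity)
    have hlog : Real.log (t * (a + b) / a) = Real.log t - Real.log (a / (a + b)) := by
      rw [Real.log_div (by positivity) (ne_of_gt h0), Real.log_mul (ne_of_gt ht0) (ne_of_gt hab),
        Real.log_div (ne_of_gt h0) (ne_of_gt hab)]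
      ring
    have := mul_le_mul_of_nonneg_left key (le_of_lt h0)
    rw [hlog] at this
    have ha' : a * (t * (a + b) / a - 1) = t * (a + b) - a := by
      field_simp
    nlinarith

lemma gan_pt (a b t : ℝ) (ha : 0 ≤ a) (hb : 0 ≤ b) (hab : 0 < a + b)
    (ht : t ∈ Set.Ioo (0 : ℝ) 1) :
    a * Real.log t + b * Real.log (1 - t) ≤
      a * Real.log (a / (a + b)) + b * Real.log (1 - a / (a + b)) := by
  have h1 : (1 : ℝ) - a / (a + b) = b / (a + b) := by
    field_simp
    ring
  have hA := gan_half a b t ha hb hab ht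
  have hB := gan_half b a (1 - t) hb ha (by linarith) ⟨by linarith [ht.2], by linarith [ht.1]⟩
  rw [h1]
  have hba : b + a = a + b := by ring
  rw [hba] at hB
  nlinarith

/-- Optimal GAN discriminator: pointwise, `t = P x / (P x + Q x)` maximizes
`P x * log t + Q x * log (1 - t)` over `t ∈ (0,1)`, hence the discriminator
`d* x = P x / (P x + Q x)` maximizes `f d = ∑ P x log (d x) + ∑ Q x log (1 - d x)`. -/
theorem optimal_discriminator {X : Type*} [Fintype X] (P Q : X → ℝ)
    (hP0 : ∀ x, 0 ≤ P x) (hQ0 : ∀ x, 0 ≤ Q x)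
    (hP1 : ∑ x, P x = 1) (hQ1 : ∑ x, Q x = 1) :
    (∀ x, 0 < P x + Q x → ∀ t ∈ Set.Ioo (0 : ℝ) 1,
      P x * Real.log t + Q x * Real.log (1 - t) ≤
        P x * Real.log (P x / (P x + Q x)) +
          Q x * Real.log (1 - P x / (P x + Q x))) ∧
    (∀ d : X → ℝ, (∀ x, d x ∈ Set.Ioo (0 : ℝ) 1) →
      (∑ x, P x * Real.log (d x)) + (∑ x, Q x * Real.log (1 - d x)) ≤
        (∑ x, P x * Real.log (P x / (P x + Q x))) +
          (∑ x, Q x * Real.log (1 - P x / (P x + Q x)))) := by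
  constructor
  · intro x hx t ht
    exact gan_pt (P x) (Q x) t (hP0 x) (hQ0 x) hx ht
  · intro d hd
    rw [← Finset.sum_add_distrib, ← Finset.sum_add_distrib]
    apply Finset.sum_le_sum
    intro x _
    rcases lt_or_eq_of_le (by have := hP0 x; have := hQ0 x; linarith : (0:ℝ) ≤ P x + Q x) with h | h
    · exact gan_pt (P x) (Q x) (d x) (hP0 x) (hQ0 x) h (hd x)
    · have hp : P x = 0 := by have := hP0 x; have := hQ0 x; linarith
      have hq : Q x = 0 := by have := hP0 x; have := hQ0 x; linarith
      simp [hp, hq]
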